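/- For each positive integer k, let f(t) = (((1+t)^4 + (k−1)t^4)/k)^{1/4}. There exist a unique α_k < 0 and a unique β_k > 0 such that f(α_k) = f(β_k) = (2/k)^{1/4}; moreover α_k < −k^{−1/4} and β_k < k^{−1/4}. -/

import Mathlib

/-- The function `f(t) = (((1+t)⁴ + (k-1)t⁴)/k)^{1/4}` from the proof of the lemma. -/
noncomputable def f (k : ℕ) (t : ℝ) : ℝ :=
  (((1 + t) ^ 4 + ((k : ℝ) - 1) * t ^ 4) / (k : ℝ)) ^ ((1 : ℝ) / 4)

lemma aux_conv (c : ℝ) (hc : 1 ≤ c) :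
    StrictConvexOn ℝ Set.univ (fun t : ℝ => (1 + t) ^ 4 + (c - 1) * t ^ 4) := by
  apply StrictMonoOn.strictConvexOn_of_deriv convex_univ (by fun_prop)
  have hd : deriv (fun t : ℝ => (1 + t) ^ 4 + (c - 1) * t ^ 4)
      = fun t => 4 * (1 + t) ^ 3 + (c - 1) * (4 * t ^ 3) := by
    funext t
    have h1 : HasDerivAt (fun t : ℝ => (1 + t) ^ 4 + (c - 1) * t ^ 4)
        (4 * (1 + t) ^ 3 + (c - 1) * (4 * t ^ 3)) t := by
      have := (((hasDerivAt_id t).const_add 1).pow 4).add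
        (((hasDerivAt_id t).pow 4).const_mul (c - 1))
      simp only [id_eq] at this
      have e : ((fun x => 1 + x) ^ 4 + fun y => (c - 1) * (id ^ 4) y)
          = (fun t : ℝ => (1 + t) ^ 4 + (c - 1) * t ^ 4) := by
        funext x; simp
      rw [e] at this
      refine this.congr_deriv ?_
      norm_num
    exact h1.deriv
  rw [hd, interior_univ]
  intro x _ y _ hxy
  have hodd : Odd 3 := by decide
  have h1 : (1 + x) ^ 3 < (1 + y) ^ 3 := hodd.strictMono_pow (by linarith)
  have h2 : x ^ 3 ≤ y ^ 3 := (hodd.strictMono_pow (R := ℝ)).monotone hxy.le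
  show 4 * (1 + x) ^ 3 + (c - 1) * (4 * x ^ 3) < 4 * (1 + y) ^ 3 + (c - 1) * (4 * y ^ 3)
  have h3 : (c - 1) * (4 * x ^ 3) ≤ (c - 1) * (4 * y ^ 3) :=
    mul_le_mul_of_nonneg_left (by linarith) (by linarith)
  linarith

/-- There is a unique `α_k < 0` and a unique `β_k > 0` with
`f(α_k) = f(β_k) = (2/k)^{1/4}`, and moreover `α_k < -k^{-1/4}` and `β_k < k^{-1/4}`. -/
theorem stmt15 (k : ℕ) (hk : 1 ≤ k) :
    (∃! α : ℝ, α < 0 ∧ f k α = (2 / (k : ℝ)) ^ ((1 : ℝ) / 4)) ∧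
    (∃! β : ℝ, 0 < β ∧ f k β = (2 / (k : ℝ)) ^ ((1 : ℝ) / 4)) ∧
    (∀ α : ℝ, α < 0 → f k α = (2 / (k : ℝ)) ^ ((1 : ℝ) / 4) →
      α < -(k : ℝ) ^ (-(1 : ℝ) / 4)) ∧
    (∀ β : ℝ, 0 < β → f k β = (2 / (k : ℝ)) ^ ((1 : ℝ) / 4) →
      β < (k : ℝ) ^ (-(1 : ℝ) / 4)) := by
  set c : ℝ := (k : ℝ) with hcdef
  have hc : 1 ≤ c := by rw [hcdef]; exact_mod_cast hk
  have hc0 : 0 < c := lt_of_lt_of_le one_pos hc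
  set g : ℝ → ℝ := fun t => (1 + t) ^ 4 + (c - 1) * t ^ 4 with hgdef
  set a : ℝ := c ^ (-(1 : ℝ) / 4) with hadef
  have ha0 : 0 < a := Real.rpow_pos_of_pos hc0 _
  have ha1 : a ≤ 1 := Real.rpow_le_one_of_one_le_of_nonpos hc (by norm_num)
  have ha4 : a ^ 4 = 1 / c := by
    rw [hadef, ← Real.rpow_natCast (c ^ (-(1:ℝ)/4)) 4, ← Real.rpow_mul hc0.le]
    norm_num [Real.rpow_neg_one]
  -- nonnegativity of g
  have hgnn : ∀ t : ℝ, 0 ≤ g t := by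
    intro t
    have h1 : (0:ℝ) ≤ (1 + t) ^ 4 := by positivity
    have h2 : (0:ℝ) ≤ (c - 1) * t ^ 4 := by
      apply mul_nonneg (by linarith) (by positivity)
    simp only [hgdef]; linarith
  -- the key equivalence
  have key : ∀ t : ℝ, (f k t = (2 / c) ^ ((1 : ℝ) / 4) ↔ g t = 2) := by
    intro t
    constructor
    · intro h
      have h4 : ((g t / c) ^ ((1:ℝ)/4)) ^ (4:ℕ) = ((2 / c) ^ ((1:ℝ)/4)) ^ (4:ℕ) := by
        rw [← h]; rfl
      have e1 : ((g t / c) ^ ((1:ℝ)/4)) ^ (4:ℕ) = g t / c := by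
        rw [← Real.rpow_natCast ((g t / c) ^ ((1:ℝ)/4)) 4, ← Real.rpow_mul
          (div_nonneg (hgnn t) hc0.le)]
        norm_num
      have e2 : (((2:ℝ) / c) ^ ((1:ℝ)/4)) ^ (4:ℕ) = 2 / c := by
        rw [← Real.rpow_natCast (((2:ℝ) / c) ^ ((1:ℝ)/4)) 4, ← Real.rpow_mul
          (by positivity)]
        norm_num
      rw [e1, e2] at h4
      field_simp at h4
      exact h4
    · intro h
      show (g t / c) ^ ((1:ℝ)/4) = _
      rw [h]
  -- g is small on [-a, 0)
  have hsmall : ∀ t : ℝ, -a ≤ t → t < 0 → g t < 2 := by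
    intro t h1 h2
    have hb1 : (1 + t) ^ 4 < 1 := by
      have h3 : 0 ≤ 1 + t := by linarith
      have h4 : 1 + t < 1 := by linarith
      calc (1 + t) ^ 4 ≤ (1 + t) ^ 1 := by
            apply pow_le_pow_of_le_one h3 h4.le; norm_num
        _ < 1 := by linarith
    have hb2 : t ^ 4 ≤ 1 / c := by
      rw [← ha4]
      have : t ^ 4 = (-t) ^ 4 := by ring
      rw [this]
      exact pow_le_pow_left₀ (by linarith) (by linarith) 4
    have hb3 : (c - 1) * t ^ 4 ≤ (c - 1) * (1 / c) := by
      apply mul_le_mul_of_nonneg_left hb2 (by linarith)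
    have hb4 : (c - 1) * (1 / c) < 1 := by
      rw [mul_one_div, div_lt_one hc0]
      linarith
    simp only [hgdef]; linarith
  -- g a > 2
  have hga : 2 < g a := by
    have h1 : (1 + a) ^ 4 > 1 + a ^ 4 := by nlinarith [ha0, sq_nonneg a]
    have h2 : (c - 1) * a ^ 4 = 1 - 1 / c := by
      rw [ha4]; field_simp
    have h3 : (1:ℝ)/c ≤ 1 := by
      rw [div_le_one hc0]; linarith
    have h4 : a ^ 4 = 1 / c := ha4
    simp only [hgdef]
    nlinarith
  -- g grows on [a, ∞)
  have hmono : ∀ t : ℝ, a ≤ t → g a ≤ g t := by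
    intro t ht
    have h1 : (1 + a) ^ 4 ≤ (1 + t) ^ 4 := by
      apply pow_le_pow_left₀ (by linarith) (by linarith)
    have h2 : (c - 1) * a ^ 4 ≤ (c - 1) * t ^ 4 := by
      apply mul_le_mul_of_nonneg_left _ (by linarith)
      apply pow_le_pow_left₀ ha0.le ht
    simp only [hgdef]; linarith
  have hgcont : Continuous g := by fun_prop
  -- existence of β
  have hg0 : g 0 = 1 := by simp [hgdef]
  obtain ⟨β, hβmem, hβ⟩ : ∃ β ∈ Set.Ioo (0:ℝ) a, g β = 2 := by
    have := intermediate_value_Ioo (le_of_lt ha0) hgcont.continuousOn (a := 0) (b := a)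
    have h2 : (2:ℝ) ∈ Set.Ioo (g 0) (g a) := by
      constructor
      · rw [hg0]; norm_num
      · exact hga
    obtain ⟨x, hx, hx2⟩ := this h2
    exact ⟨x, hx, hx2⟩
  -- existence of α
  obtain ⟨α, hαmem, hα⟩ : ∃ α ∈ Set.Ioo (-3:ℝ) (-a), g α = 2 := by
    have hle : (-3:ℝ) ≤ -a := by linarith
    have := intermediate_value_Ioo' hle hgcont.continuousOn (a := -3) (b := -a)
    have h2 : (2:ℝ) ∈ Set.Ioo (g (-a)) (g (-3)) := by
      constructor
      · exact hsmall (-a) le_rfl (by linarith)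
      · show (2:ℝ) < (1 + -3) ^ 4 + (c - 1) * (-3) ^ 4
        nlinarith
    obtain ⟨x, hx, hx2⟩ := this h2
    exact ⟨x, hx, hx2⟩
  have hαneg : α < 0 := lt_of_lt_of_le hαmem.2 (by linarith)
  have hβpos : 0 < β := hβmem.1
  -- convexity: between two roots, g < 2
  have conv3 : ∀ x y z : ℝ, x < y → y < z → g x = 2 → g z = 2 → g y < 2 := by
    intro x y z hxy hyz hx hz
    have hconv := aux_conv c hc
    have hmem : y ∈ openSegment ℝ x z := by
      rw [openSegment_eq_Ioo (hxy.trans hyz)]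
      exact ⟨hxy, hyz⟩
    have := hconv.lt_on_openSegment (Set.mem_univ x) (Set.mem_univ z)
      (ne_of_lt (hxy.trans hyz)) hmem
    have h5 : g y < max (g x) (g z) := this
    rw [hx, hz, max_self] at h5
    exact h5
  -- bounds
  have hboundneg : ∀ t : ℝ, t < 0 → g t = 2 → t < -a := by
    intro t ht hgt
    by_contra h
    push_neg at h
    have := hsmall t h ht
    linarith
  have hboundpos : ∀ t : ℝ, 0 < t → g t = 2 → t < a := by
    intro t ht hgt
    by_contra h
    push_neg at h
    have := hmono t h
    linarith
  refine ⟨⟨α, ⟨hαneg, (key α).mpr hα⟩, ?_⟩, ⟨β, ⟨hβpos, (key β).mpr hβ⟩, ?_⟩, ?_, ?_⟩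
  · rintro α' ⟨hα'neg, hα'eq⟩
    have hgα' : g α' = 2 := (key α').mp hα'eq
    rcases lt_trichotomy α' α with h | h | h
    · exfalso
      have := conv3 α' α β h (lt_trans hαneg hβpos) hgα' hβ
      linarith
    · exact h
    · exfalso
      have := conv3 α α' β h (lt_trans hα'neg hβpos) hα hβ
      linarith
  · rintro β' ⟨hβ'pos, hβ'eq⟩
    have hgβ' : g β' = 2 := (key β').mp hβ'eq
    rcases lt_trichotomy β' β with h | h | h
    · exfalso
      have := conv3 α β' β (lt_trans hαneg hβ'pos) h hα hβ
      linarith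
    · exact h
    · exfalso
      have := conv3 α β β' (lt_trans hαneg hβpos) h hα hgβ'
      linarith
  · intro t ht hteq
    exact hboundneg t ht ((key t).mp hteq)
  · intro t ht hteq
    exact hboundpos t ht ((key t).mp hteq)
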